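/- arXiv:2302.00628 — 7 statements merged into one kernel-verified Lean document; each statement's English description precedes it below -/
import Mathlib

section
/- For every λ ∈ (0,∞), the precision equals α_λ(P‖P̂) = min(1, λ) − D_λ^PR(P‖P̂); that is, ∫ min(λ p(x), p̂(x)) dμ(x) = min(1, λ) − ∫ p̂(x) (max(λ p(x)/p̂(x), 1) − max(λ, 1)) dμ(x). -/
open MeasureTheory

/-- Precision as a function of the PR-divergence:
`α_λ(P‖P̂) = min(1, λ) − D_λ^PR(P‖P̂)`. -/
theorem precision_eq_min_sub_PRdiv
    {X : Type*} [MeasurableSpace X] (μ : Measure X) [SigmaFinite μ]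
    (p phat : X → ℝ) (hp : Measurable p) (hphat : Measurable phat)
    (hp0 : ∀ x, 0 ≤ p x) (hphat0 : ∀ x, 0 ≤ phat x)
    (hpint : ∫ x, p x ∂μ = 1) (hphatint : ∫ x, phat x ∂μ = 1)
    (hphatpos : ∀ᵐ x ∂μ, 0 < phat x)
    (lam : ℝ) (hlam : 0 < lam) :
    ∫ x, min (lam * p x) (phat x) ∂μ =
      min 1 lam -
        ∫ x, phat x * (max (lam * (p x / phat x)) 1 - max lam 1) ∂μ := by
  have hpInt : Integrable p μ := by
    by_contra h; rw [integral_undef h] at hpint; norm_num at hpint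
  have hphatInt : Integrable phat μ := by
    by_contra h; rw [integral_undef h] at hphatint; norm_num at hphatint
  have hSumInt : Integrable (fun x => lam * p x + phat x) μ :=
    (hpInt.const_mul lam).add hphatInt
  have hMaxInt : Integrable (fun x => max (lam * p x) (phat x)) μ := by
    refine Integrable.mono hSumInt
      (((hp.const_mul lam).max hphat).aestronglyMeasurable) ?_
    filter_upwards with x
    have h1 : 0 ≤ lam * p x := mul_nonneg hlam.le (hp0 x)
    have h2 := hphat0 x
    rw [Real.norm_eq_abs, Real.norm_eq_abs, abs_of_nonneg (le_max_of_le_left h1),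
      abs_of_nonneg (by positivity : (0:ℝ) ≤ lam * p x + phat x)]
    exact max_le (le_add_of_nonneg_right h2) (le_add_of_nonneg_left h1)
  have hEq : ∀ᵐ x ∂μ, phat x * (max (lam * (p x / phat x)) 1 - max lam 1)
      = max (lam * p x) (phat x) - max lam 1 * phat x := by
    filter_upwards [hphatpos] with x hx
    rw [mul_sub]
    congr 1
    · rw [mul_comm, max_mul_of_nonneg _ _ hx.le, one_mul]
      congr 1
      field_simp
    · ring
  have hRHS : ∫ x, phat x * (max (lam * (p x / phat x)) 1 - max lam 1) ∂μ
      = (∫ x, max (lam * p x) (phat x) ∂μ) - max lam 1 := by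
    rw [integral_congr_ae hEq, integral_sub hMaxInt (hphatInt.const_mul _),
      integral_const_mul, hphatint, mul_one]
  have hmin : ∀ x, min (lam * p x) (phat x)
      = lam * p x + phat x - max (lam * p x) (phat x) := by
    intro x
    rw [← min_add_max (lam * p x) (phat x)]; ring
  have hLHS : ∫ x, min (lam * p x) (phat x) ∂μ
      = lam + 1 - ∫ x, max (lam * p x) (phat x) ∂μ := by
    simp only [hmin]
    rw [integral_sub hSumInt hMaxInt,
      integral_add (hpInt.const_mul lam) hphatInt, integral_const_mul, hpint, hphatint,
      mul_one]
  have hsum : min 1 lam + max 1 lam = 1 + lam := min_add_max 1 lam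
  rw [hLHS, hRHS, max_comm lam 1]
  linarith
end

section
/- For every λ ∈ (0,∞) and every t ∈ [0, λ], the convex conjugate of f_λ satisfies f_λ*(t) := sup_{u ≥ 0} (t·u − f_λ(u)) = t/λ + max(λ, 1) − 1; in particular f_λ*(t) = t/λ when λ ≤ 1 and f_λ*(t) = t/λ + λ − 1 when λ > 1. -/
/-- The convex conjugate of `f_λ(u) = max(λu, 1) − max(λ, 1)` on `[0, λ]`:
`f_λ*(t) = t/λ + max(λ, 1) − 1`; in particular `f_λ*(t) = t/λ` if `λ ≤ 1`
and `f_λ*(t) = t/λ + λ − 1` if `λ > 1`. -/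
theorem fenchel_conjugate_PR
    (lam : ℝ) (hlam : 0 < lam) (t : ℝ) (ht : t ∈ Set.Icc 0 lam) :
    sSup ((fun u => t * u - (max (lam * u) 1 - max lam 1)) '' Set.Ici 0) =
      t / lam + max lam 1 - 1 ∧
    (lam ≤ 1 →
      sSup ((fun u => t * u - (max (lam * u) 1 - max lam 1)) '' Set.Ici 0) =
        t / lam) ∧
    (1 < lam →
      sSup ((fun u => t * u - (max (lam * u) 1 - max lam 1)) '' Set.Ici 0) =
        t / lam + lam - 1) := by
  obtain ⟨ht0, htl⟩ := ht
  have hbound : ∀ x ∈ (fun u => t * u - (max (lam * u) 1 - max lam 1)) '' Set.Ici 0,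
      x ≤ t / lam + max lam 1 - 1 := by
    rintro x ⟨u, hu, rfl⟩
    simp only [Set.mem_Ici] at hu
    dsimp only
    rcases le_total (lam * u) 1 with h | h
    · have hul : u ≤ 1 / lam := by
        rw [le_div_iff₀ hlam]; linarith [mul_comm lam u]
      have : t * u ≤ t / lam := by
        calc t * u ≤ t * (1 / lam) := by nlinarith
        _ = t / lam := by ring
      rw [max_eq_right h]; linarith
    · have hul : 1 / lam ≤ u := by
        rw [div_le_iff₀ hlam]; linarith [mul_comm lam u]
      rw [max_eq_left h]
      have : (t - lam) * u ≤ (t - lam) * (1 / lam) := by nlinarith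
      have h2 : (t - lam) * (1 / lam) = t / lam - 1 := by
        field_simp
      nlinarith
  have hmem : t / lam + max lam 1 - 1 ∈
      (fun u => t * u - (max (lam * u) 1 - max lam 1)) '' Set.Ici 0 := by
    refine ⟨1 / lam, Set.mem_Ici.mpr (by positivity), ?_⟩
    dsimp only
    have : lam * (1 / lam) = 1 := by field_simp
    rw [this]
    simp
    ring
  have key : sSup ((fun u => t * u - (max (lam * u) 1 - max lam 1)) '' Set.Ici 0) =
      t / lam + max lam 1 - 1 := by
    apply le_antisymm
    · exact csSup_le ⟨_, hmem⟩ hbound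
    · exact le_csSup ⟨_, hbound⟩ hmem
  refine ⟨key, fun h => ?_, fun h => ?_⟩
  · rw [key, max_eq_right h]; ring
  · rw [key, max_eq_left h.le]
end

section
/- Let f : (0,∞) → ℝ be twice continuously differentiable with f(1) = 0, and suppose there exist constants 0 < m ≤ 1 ≤ M < ∞ such that m ≤ p̂(x)/p(x) ≤ M for μ-a.e. x. Then the f-divergence decomposes as a weighted integral of PR-divergences: ∫ p̂(x) f(p(x)/p̂(x)) dμ(x) = ∫_m^M (1/λ³) f''(1/λ) · D_λ^PR(P‖P̂) dλ. -/
open MeasureTheory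

section Aux

lemma aux_hderiv1 {f : ℝ → ℝ} (hf : ContDiffOn ℝ 2 f (Set.Ioi 0)) {t : ℝ} (ht : 0 < t) :
    HasDerivAt f (deriv f t) t :=
  ((hf.differentiableOn (by norm_num)).differentiableAt
    (isOpen_Ioi.mem_nhds ht)).hasDerivAt

lemma aux_hd2 {f : ℝ → ℝ} (hf : ContDiffOn ℝ 2 f (Set.Ioi 0)) :
    ContDiffOn ℝ 1 (deriv f) (Set.Ioi 0) :=
  hf.deriv_of_isOpen isOpen_Ioi (by norm_num)

lemma aux_hderiv2 {f : ℝ → ℝ} (hf : ContDiffOn ℝ 2 f (Set.Ioi 0)) {t : ℝ} (ht : 0 < t) :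
    HasDerivAt (deriv f) (deriv (deriv f) t) t :=
  (((aux_hd2 hf).differentiableOn (by norm_num)).differentiableAt
    (isOpen_Ioi.mem_nhds ht)).hasDerivAt

lemma aux_hcont2 {f : ℝ → ℝ} (hf : ContDiffOn ℝ 2 f (Set.Ioi 0)) :
    ContinuousOn (deriv (deriv f)) (Set.Ioi 0) :=
  (aux_hd2 hf).continuousOn_deriv_of_isOpen isOpen_Ioi (by norm_num)

lemma aux_kernel_integral {f : ℝ → ℝ} (hf : ContDiffOn ℝ 2 f (Set.Ioi 0)) {a b r : ℝ}
    (ha : 0 < a) (ha1 : a ≤ 1) (hb1 : 1 ≤ b) (har : a ≤ r) (hrb : r ≤ b) :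
    ∫ t in a..b, deriv (deriv f) t * (max r t - max 1 t)
      = f r - f 1 - deriv f a * (r - 1) := by
  set F : ℝ → ℝ := fun t => deriv (deriv f) t * (max r t - max 1 t) with hF
  have hab : a ≤ b := ha1.trans hb1
  have hIcc : Set.Icc a b ⊆ Set.Ioi 0 := fun t ht => lt_of_lt_of_le ha ht.1
  have hFcont : ContinuousOn F (Set.Icc a b) :=
    ((aux_hcont2 hf).mono hIcc).mul
      (((continuous_const.max continuous_id).sub
        (continuous_const.max continuous_id)).continuousOn)
  have hF2cont : ContinuousOn (deriv (deriv f)) (Set.Icc a b) := (aux_hcont2 hf).mono hIcc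
  have hF1cont : ContinuousOn (deriv f) (Set.Icc a b) := ((aux_hd2 hf).continuousOn).mono hIcc
  have hFi : ∀ c d : ℝ, a ≤ c → d ≤ b → c ≤ d → IntervalIntegrable F volume c d := by
    intro c d hc hd hcd
    apply ContinuousOn.intervalIntegrable
    apply hFcont.mono
    rw [Set.uIcc_of_le hcd]
    exact Set.Icc_subset_Icc hc hd
  have hF2i : ∀ c d : ℝ, a ≤ c → d ≤ b → c ≤ d →
      IntervalIntegrable (deriv (deriv f)) volume c d := by
    intro c d hc hd hcd
    apply ContinuousOn.intervalIntegrable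
    apply hF2cont.mono
    rw [Set.uIcc_of_le hcd]
    exact Set.Icc_subset_Icc hc hd
  have hF1i : ∀ c d : ℝ, a ≤ c → d ≤ b → c ≤ d →
      IntervalIntegrable (deriv f) volume c d := by
    intro c d hc hd hcd
    apply ContinuousOn.intervalIntegrable
    apply hF1cont.mono
    rw [Set.uIcc_of_le hcd]
    exact Set.Icc_subset_Icc hc hd
  have hmem : ∀ {c d : ℝ}, a ≤ c → d ≤ b → c ≤ d → ∀ t ∈ Set.uIcc c d, 0 < t := by
    intro c d hc hd hcd t ht
    rw [Set.uIcc_of_le hcd] at ht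
    exact lt_of_lt_of_le ha (hc.trans ht.1)
  have hFTC2 : ∀ c d : ℝ, a ≤ c → d ≤ b → c ≤ d →
      ∫ t in c..d, deriv (deriv f) t = deriv f d - deriv f c := by
    intro c d hc hd hcd
    exact intervalIntegral.integral_eq_sub_of_hasDerivAt
      (fun t ht => aux_hderiv2 hf (hmem hc hd hcd t ht)) (hF2i c d hc hd hcd)
  have hFTC1 : ∀ c d : ℝ, a ≤ c → d ≤ b → c ≤ d →
      ∫ t in c..d, deriv f t = f d - f c := by
    intro c d hc hd hcd
    exact intervalIntegral.integral_eq_sub_of_hasDerivAt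
      (fun t ht => aux_hderiv1 hf (hmem hc hd hcd t ht)) (hF1i c d hc hd hcd)
  rcases le_total 1 r with h1r | hr1
  · have split : ∫ t in a..b, F t =
        (∫ t in a..1, F t) + (∫ t in (1:ℝ)..r, F t) + (∫ t in r..b, F t) := by
      rw [intervalIntegral.integral_add_adjacent_intervals (hFi a 1 le_rfl hb1 ha1)
            (hFi 1 r ha1 hrb h1r),
          intervalIntegral.integral_add_adjacent_intervals (hFi a r le_rfl hrb har)
            (hFi r b har le_rfl hrb)]
    have e1 : ∫ t in a..1, F t = (deriv f 1 - deriv f a) * (r - 1) := by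
      have : ∫ t in a..1, F t = ∫ t in a..1, deriv (deriv f) t * (r - 1) := by
        apply intervalIntegral.integral_congr
        intro t ht
        rw [Set.uIcc_of_le ha1] at ht
        simp only [hF]
        rw [max_eq_left (ht.2.trans h1r), max_eq_left ht.2]
      rw [this, intervalIntegral.integral_mul_const, hFTC2 a 1 le_rfl hb1 ha1]
    have e2 : ∫ t in (1:ℝ)..r, F t = f r - f 1 - deriv f 1 * (r - 1) := by
      have : ∫ t in (1:ℝ)..r, F t = ∫ t in (1:ℝ)..r, (r - t) * deriv (deriv f) t := by
        apply intervalIntegral.integral_congr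
        intro t ht
        rw [Set.uIcc_of_le h1r] at ht
        simp only [hF]
        rw [max_eq_left ht.2, max_eq_right ht.1]
        ring
      rw [this]
      have parts := intervalIntegral.integral_mul_deriv_eq_deriv_mul
        (u := fun t => r - t) (u' := fun _ => (-1 : ℝ)) (v := deriv f)
        (v' := deriv (deriv f)) (a := (1:ℝ)) (b := r)
        (fun t _ => (hasDerivAt_id t).const_sub r)
        (fun t ht => aux_hderiv2 hf (hmem ha1 hrb h1r t ht))
        (intervalIntegrable_const) (hF2i 1 r ha1 hrb h1r)
      rw [parts]
      have : ∫ t in (1:ℝ)..r, (-1 : ℝ) * deriv f t = -(f r - f 1) := by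
        rw [intervalIntegral.integral_const_mul, hFTC1 1 r ha1 hrb h1r]; ring
      rw [this]; ring
    have e3 : ∫ t in r..b, F t = 0 := by
      have : ∫ t in r..b, F t = ∫ t in r..b, (0:ℝ) := by
        apply intervalIntegral.integral_congr
        intro t ht
        rw [Set.uIcc_of_le hrb] at ht
        simp only [hF]
        rw [max_eq_right ht.1, max_eq_right (h1r.trans ht.1)]
        ring
      rw [this]; simp
    rw [split, e1, e2, e3]; ring
  · have split : ∫ t in a..b, F t =
        (∫ t in a..r, F t) + (∫ t in r..(1:ℝ), F t) + (∫ t in (1:ℝ)..b, F t) := by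
      rw [intervalIntegral.integral_add_adjacent_intervals (hFi a r le_rfl (hr1.trans hb1) har)
            (hFi r 1 har hb1 hr1),
          intervalIntegral.integral_add_adjacent_intervals (hFi a 1 le_rfl hb1 ha1)
            (hFi 1 b ha1 le_rfl hb1)]
    have e1 : ∫ t in a..r, F t = (deriv f r - deriv f a) * (r - 1) := by
      have : ∫ t in a..r, F t = ∫ t in a..r, deriv (deriv f) t * (r - 1) := by
        apply intervalIntegral.integral_congr
        intro t ht
        rw [Set.uIcc_of_le har] at ht
        simp only [hF]
        rw [max_eq_left ht.2, max_eq_left (ht.2.trans hr1)]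
      rw [this, intervalIntegral.integral_mul_const, hFTC2 a r le_rfl (hr1.trans hb1) har]
    have e2 : ∫ t in r..(1:ℝ), F t = f r - f 1 - deriv f r * (r - 1) := by
      have : ∫ t in r..(1:ℝ), F t = ∫ t in r..(1:ℝ), (t - 1) * deriv (deriv f) t := by
        apply intervalIntegral.integral_congr
        intro t ht
        rw [Set.uIcc_of_le hr1] at ht
        simp only [hF]
        rw [max_eq_right ht.1, max_eq_left ht.2]
        ring
      rw [this]
      have parts := intervalIntegral.integral_mul_deriv_eq_deriv_mul
        (u := fun t => t - 1) (u' := fun _ => (1 : ℝ)) (v := deriv f)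
        (v' := deriv (deriv f)) (a := r) (b := (1:ℝ))
        (fun t _ => (hasDerivAt_id t).sub_const 1)
        (fun t ht => aux_hderiv2 hf (hmem har hb1 hr1 t ht))
        (intervalIntegrable_const) (hF2i r 1 har hb1 hr1)
      rw [parts]
      have : ∫ t in r..(1:ℝ), (1 : ℝ) * deriv f t = f 1 - f r := by
        rw [intervalIntegral.integral_const_mul, hFTC1 r 1 har hb1 hr1]; ring
      rw [this]; ring
    have e3 : ∫ t in (1:ℝ)..b, F t = 0 := by
      have : ∫ t in (1:ℝ)..b, F t = ∫ t in (1:ℝ)..b, (0:ℝ) := by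
        apply intervalIntegral.integral_congr
        intro t ht
        rw [Set.uIcc_of_le hb1] at ht
        simp only [hF]
        rw [max_eq_right (hr1.trans ht.1), max_eq_right ht.1]
        ring
      rw [this]; simp
    rw [split, e1, e2, e3]; ring

lemma aux_subst_integral {f : ℝ → ℝ} (hf : ContDiffOn ℝ 2 f (Set.Ioi 0)) {m M : ℝ} (r : ℝ)
    (hm : 0 < m) (hmM : m ≤ M) :
    ∫ lam in m..M, (1 / lam ^ 3) * deriv (deriv f) (1 / lam) * (max (lam * r) 1 - max lam 1)
      = ∫ t in (1/M)..(1/m), deriv (deriv f) t * (max r t - max 1 t) := by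
  set F : ℝ → ℝ := fun t => deriv (deriv f) t * (max r t - max 1 t) with hFdef
  have huIcc : Set.uIcc m M = Set.Icc m M := Set.uIcc_of_le hmM
  have hpos : ∀ lam ∈ Set.uIcc m M, 0 < lam := by
    intro lam hl; rw [huIcc] at hl; exact lt_of_lt_of_le hm hl.1
  have hder : ∀ lam ∈ Set.uIcc m M, HasDerivAt (fun y : ℝ => y⁻¹) (-((lam:ℝ)^2)⁻¹) lam :=
    fun lam hl => hasDerivAt_inv (hpos lam hl).ne'
  have hcontd : ContinuousOn (fun lam : ℝ => -((lam:ℝ)^2)⁻¹) (Set.uIcc m M) := by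
    apply ContinuousOn.neg
    apply ContinuousOn.inv₀ ((continuous_pow 2).continuousOn)
    intro lam hl; exact pow_ne_zero 2 (hpos lam hl).ne'
  have himg : (fun y : ℝ => y⁻¹) '' Set.uIcc m M ⊆ Set.Ioi 0 := by
    rintro y ⟨lam, hl, rfl⟩; exact inv_pos.2 (hpos lam hl)
  have hFcont : ContinuousOn F ((fun y : ℝ => y⁻¹) '' Set.uIcc m M) :=
    ((aux_hcont2 hf).mul (((continuous_const.max continuous_id).sub
      (continuous_const.max continuous_id)).continuousOn)).mono himg
  have hsub := intervalIntegral.integral_comp_smul_deriv' hder hcontd hFcont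
  have hcongr : ∀ lam ∈ Set.uIcc m M,
      (1 / lam ^ 3) * deriv (deriv f) (1 / lam) * (max (lam * r) 1 - max lam 1)
        = -((-((lam:ℝ)^2)⁻¹) • (F ∘ fun y : ℝ => y⁻¹) lam) := by
    intro lam hl
    have hl0 := hpos lam hl
    have h1 : max (lam * r) 1 = lam * max r lam⁻¹ := by
      rw [mul_max_of_nonneg _ _ hl0.le, mul_inv_cancel₀ hl0.ne']
    have h2 : max lam 1 = lam * max 1 lam⁻¹ := by
      rw [mul_max_of_nonneg _ _ hl0.le, mul_inv_cancel₀ hl0.ne', mul_one]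
    simp only [Function.comp, hFdef, smul_eq_mul, one_div, h1, h2]
    have h3 : lam ^ 3 ≠ 0 := pow_ne_zero 3 hl0.ne'
    field_simp
  rw [intervalIntegral.integral_congr hcongr, intervalIntegral.integral_neg, hsub,
    ← intervalIntegral.integral_symm]
  simp [one_div, hFdef]

lemma aux_ae_fst {α β : Type*} [MeasurableSpace α] [MeasurableSpace β]
    (ν : Measure α) (μ : Measure β) [SFinite ν] [SFinite μ] {P : α → Prop}
    (h : ∀ᵐ a ∂ν, P a) : ∀ᵐ z ∂(ν.prod μ), P z.1 := by
  obtain ⟨t, hsub, htm, ht0⟩ := exists_measurable_superset_of_null (ae_iff.1 h)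
  rw [ae_iff]
  refine measure_mono_null (fun z hz => ?_) (?_ : (ν.prod μ) (t ×ˢ Set.univ) = 0)
  · exact ⟨hsub hz, Set.mem_univ _⟩
  · rw [Measure.prod_prod, ht0, zero_mul]

lemma aux_ae_snd {α β : Type*} [MeasurableSpace α] [MeasurableSpace β]
    (ν : Measure α) (μ : Measure β) [SFinite ν] [SFinite μ] {P : β → Prop}
    (h : ∀ᵐ b ∂μ, P b) : ∀ᵐ z ∂(ν.prod μ), P z.2 := by
  obtain ⟨t, hsub, htm, ht0⟩ := exists_measurable_superset_of_null (ae_iff.1 h)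
  rw [ae_iff]
  refine measure_mono_null (fun z hz => ?_) (?_ : (ν.prod μ) (Set.univ ×ˢ t) = 0)
  · exact ⟨Set.mem_univ _, hsub hz⟩
  · rw [Measure.prod_prod, ht0, mul_zero]

end Aux

/-- Any (twice continuously differentiable) `f`-divergence decomposes as a weighted
integral of PR-divergences:
`D_f(P‖P̂) = ∫_m^M (1/λ³) f''(1/λ) · D_λ^PR(P‖P̂) dλ`. -/
theorem fdiv_eq_weighted_integral_PRdiv
    {X : Type*} [MeasurableSpace X] (μ : Measure X) [SigmaFinite μ]
    (p phat : X → ℝ) (hp : Measurable p) (hphat : Measurable phat)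
    (hp0 : ∀ x, 0 ≤ p x) (hphat0 : ∀ x, 0 ≤ phat x)
    (hpint : ∫ x, p x ∂μ = 1) (hphatint : ∫ x, phat x ∂μ = 1)
    (hppos : ∀ᵐ x ∂μ, 0 < p x) (hphatpos : ∀ᵐ x ∂μ, 0 < phat x)
    (f : ℝ → ℝ) (hf : ContDiffOn ℝ 2 f (Set.Ioi 0)) (hf1 : f 1 = 0)
    (m M : ℝ) (hm : 0 < m) (hm1 : m ≤ 1) (hM1 : 1 ≤ M)
    (hratio : ∀ᵐ x ∂μ, m ≤ phat x / p x ∧ phat x / p x ≤ M) :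
    ∫ x, phat x * f (p x / phat x) ∂μ =
      ∫ lam in m..M,
        (1 / lam ^ 3) * deriv (deriv f) (1 / lam) *
          ∫ x, phat x * (max (lam * (p x / phat x)) 1 - max lam 1) ∂μ := by
  have hmM : m ≤ M := hm1.trans hM1
  have hMpos : 0 < M := lt_of_lt_of_le hm hmM
  set w : ℝ → ℝ := fun lam => (1 / lam ^ 3) * deriv (deriv f) (1 / lam) with hwdef
  set k : ℝ → X → ℝ := fun lam x => max (lam * (p x / phat x)) 1 - max lam 1 with hkdef
  set H : ℝ → X → ℝ := fun lam x => phat x * (w lam * k lam x) with hHdef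
  set ν : Measure ℝ := volume.restrict (Set.Ioc m M) with hνdef
  set c : ℝ := deriv f (1 / M) with hcdef
  -- integrability of p, phat
  have hpInt : Integrable p μ := by
    by_contra h; rw [integral_undef h] at hpint; norm_num at hpint
  have hphatInt : Integrable phat μ := by
    by_contra h; rw [integral_undef h] at hphatint; norm_num at hphatint
  -- measurability of uncurried H
  have hw : Measurable w := by
    apply Measurable.mul
    · exact measurable_const.div (measurable_id.pow_const 3)
    · exact (measurable_deriv (deriv f)).comp (measurable_const.div measurable_id)
  have hHeq : Function.uncurry H = fun z : ℝ × X =>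
      phat z.2 * (w z.1 * (max (z.1 * (p z.2 / phat z.2)) 1 - max z.1 1)) := rfl
  have hHm : Measurable (Function.uncurry H) := by
    rw [hHeq]
    apply Measurable.mul (hphat.comp measurable_snd)
    apply Measurable.mul (hw.comp measurable_fst)
    apply Measurable.sub
    · exact (measurable_fst.mul ((hp.comp measurable_snd).div
        (hphat.comp measurable_snd))).max measurable_const
    · exact measurable_fst.max measurable_const
  -- bound for w on [m, M]
  have hwcont : ContinuousOn w (Set.Icc m M) := by
    apply ContinuousOn.mul
    · exact ContinuousOn.div continuousOn_const ((continuous_pow 3).continuousOn)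
        (fun lam hl => pow_ne_zero 3 (lt_of_lt_of_le hm hl.1).ne')
    · apply (aux_hcont2 hf).comp
        (ContinuousOn.div continuousOn_const continuousOn_id
          (fun lam hl => (lt_of_lt_of_le hm hl.1).ne'))
      intro lam hl
      have h0 : 0 < lam := lt_of_lt_of_le hm hl.1
      exact Set.mem_Ioi.2 (div_pos one_pos h0)
  obtain ⟨C, hC⟩ := (isCompact_Icc (a := m) (b := M)).exists_bound_of_continuousOn hwcont
  have hC0 : 0 ≤ C := le_trans (norm_nonneg _) (hC m ⟨le_rfl, hmM⟩)
  -- integrability of uncurried H on the product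
  have hH : Integrable (Function.uncurry H) (ν.prod μ) := by
    apply Integrable.mono'
      (g := fun z : ℝ × X => (C * M) * |p z.2 - phat z.2|) ?_ hHm.aestronglyMeasurable
    · filter_upwards [aux_ae_fst ν μ (ae_restrict_mem measurableSet_Ioc),
        aux_ae_snd ν μ hphatpos] with z hz1 hz2
      rw [hHeq]
      have hz10 : 0 < z.1 := lt_of_lt_of_le hm hz1.1.le
      have habs : |p z.2 - phat z.2| = |phat z.2| * |p z.2 / phat z.2 - 1| := by
        rw [← abs_mul]
        congr 1
        field_simp
      have h1 : |w z.1| ≤ C := by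
        have := hC z.1 ⟨hz1.1.le, hz1.2⟩
        rwa [Real.norm_eq_abs] at this
      have h2 : |max (z.1 * (p z.2 / phat z.2)) 1 - max z.1 1|
          ≤ M * |p z.2 / phat z.2 - 1| := by
        calc |max (z.1 * (p z.2 / phat z.2)) 1 - max z.1 1|
            ≤ |z.1 * (p z.2 / phat z.2) - z.1| := abs_max_sub_max_le_abs _ _ _
          _ = |z.1| * |p z.2 / phat z.2 - 1| := by
              rw [← abs_mul]; congr 1; ring
          _ ≤ M * |p z.2 / phat z.2 - 1| := by
              apply mul_le_mul_of_nonneg_right _ (abs_nonneg _)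
              rw [abs_of_pos hz10]; exact hz1.2
      calc ‖phat z.2 * (w z.1 * (max (z.1 * (p z.2 / phat z.2)) 1 - max z.1 1))‖
          = |phat z.2| * (|w z.1| * |max (z.1 * (p z.2 / phat z.2)) 1 - max z.1 1|) := by
            rw [Real.norm_eq_abs, abs_mul, abs_mul]
        _ ≤ |phat z.2| * (C * (M * |p z.2 / phat z.2 - 1|)) := by
            apply mul_le_mul_of_nonneg_left _ (abs_nonneg _)
            exact mul_le_mul h1 h2 (abs_nonneg _) hC0
        _ = (C * M) * (|phat z.2| * |p z.2 / phat z.2 - 1|) := by ring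
        _ = (C * M) * |p z.2 - phat z.2| := by rw [← habs]
    · apply Integrable.mul_prod (f := fun _ : ℝ => C * M) (g := fun x => |p x - phat x|)
      · exact (integrableOn_const measure_Ioc_lt_top.ne :
          IntegrableOn (fun _ : ℝ => C * M) (Set.Ioc m M) volume)
      · exact (hpInt.sub hphatInt).abs
  -- a.e. evaluation of the inner (lam) integral
  have hinner : ∀ᵐ x ∂μ,
      ∫ lam, H lam x ∂ν = phat x * f (p x / phat x) - c * (p x - phat x) := by
    filter_upwards [hppos, hphatpos, hratio] with x hx1 hx2 hx3
    have hs : 0 < phat x / p x := div_pos hx2 hx1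
    have hr1 : 1 / M ≤ p x / phat x := by
      have := one_div_le_one_div_of_le hs hx3.2
      rwa [one_div_div] at this
    have hr2 : p x / phat x ≤ 1 / m := by
      have := one_div_le_one_div_of_le hm hx3.1
      rwa [one_div_div] at this
    have e1 : ∫ lam, H lam x ∂ν = ∫ lam in m..M, phat x * (w lam * k lam x) := by
      rw [intervalIntegral.integral_of_le hmM]
    rw [e1, intervalIntegral.integral_const_mul]
    have e2 : ∫ lam in m..M, w lam * k lam x
        = f (p x / phat x) - f 1 - deriv f (1 / M) * (p x / phat x - 1) := by
      have := aux_subst_integral hf (p x / phat x) hm hmM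
      rw [hwdef, hkdef]
      rw [this]
      exact aux_kernel_integral hf (by positivity) (by
          rw [div_le_one hMpos]; exact hM1) (by
          rw [le_div_iff₀ hm, one_mul]; exact hm1) hr1 hr2
    rw [e2, hf1]
    have e3 : phat x * (p x / phat x - 1) = p x - phat x := by
      field_simp
    rw [hcdef]
    calc phat x * (f (p x / phat x) - 0 - deriv f (1 / M) * (p x / phat x - 1))
        = phat x * f (p x / phat x)
            - deriv f (1 / M) * (phat x * (p x / phat x - 1)) := by ring
      _ = phat x * f (p x / phat x) - deriv f (1 / M) * (p x - phat x) := by rw [e3]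
  -- RHS as double integral
  have hRHS : (∫ lam in m..M, w lam * ∫ x, phat x * k lam x ∂μ)
      = ∫ lam, (∫ x, H lam x ∂μ) ∂ν := by
    rw [intervalIntegral.integral_of_le hmM]
    apply integral_congr_ae
    apply Filter.Eventually.of_forall
    intro lam
    show w lam * (∫ x, phat x * k lam x ∂μ) = ∫ x, H lam x ∂μ
    have : (fun x => H lam x) = fun x => w lam * (phat x * k lam x) := by
      funext x; simp only [hHdef]; ring
    rw [this, integral_const_mul]
  -- final assembly
  have hswap := integral_integral_swap hH
  have hint1 : Integrable (fun x => ∫ lam, H lam x ∂ν) μ := hH.integral_prod_right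
  have hint2 : Integrable (fun x => c * (p x - phat x)) μ :=
    ((hpInt.sub hphatInt).const_mul c)
  have heq : ∀ᵐ x ∂μ, phat x * f (p x / phat x)
      = (∫ lam, H lam x ∂ν) + c * (p x - phat x) := by
    filter_upwards [hinner] with x hx
    rw [hx]; ring
  calc ∫ x, phat x * f (p x / phat x) ∂μ
      = ∫ x, ((∫ lam, H lam x ∂ν) + c * (p x - phat x)) ∂μ := integral_congr_ae heq
    _ = (∫ x, ∫ lam, H lam x ∂ν ∂μ) + ∫ x, c * (p x - phat x) ∂μ :=
        integral_add hint1 hint2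
    _ = ∫ x, ∫ lam, H lam x ∂ν ∂μ := by
        rw [integral_const_mul, integral_sub hpInt hphatInt, hpint, hphatint]
        ring
    _ = ∫ lam, (∫ x, H lam x ∂μ) ∂ν := by
        rw [← hswap]
    _ = ∫ lam in m..M, w lam * ∫ x, phat x * k lam x ∂μ := hRHS.symm
    _ = _ := rfl
end

section
/- Let c : (0,∞) → ℝ be twice continuously differentiable, and let 0 < u_min ≤ 1 ≤ u_max < ∞. Then for every u ∈ [u_min, u_max], ∫_{1/u_max}^{1/u_min} c''(λ) · (max(λu, 1) − max(λ, 1)) dλ = (c'(1/u_min)·(1/u_min) − c(1/u_min))·(u − 1) + u·c(1/u) − c(1). -/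
open MeasureTheory

private lemma aux_contDiff (c : ℝ → ℝ) (hc : ContDiffOn ℝ 2 c (Set.Ioi 0)) :
    DifferentiableOn ℝ c (Set.Ioi 0) ∧ DifferentiableOn ℝ (deriv c) (Set.Ioi 0) ∧
      ContinuousOn (deriv (deriv c)) (Set.Ioi 0) := by
  have h1 : ContDiffOn ℝ (1 + 1) c (Set.Ioi 0) := by
    convert hc using 1
    exact one_add_one_eq_two
  rw [contDiffOn_succ_iff_deriv_of_isOpen isOpen_Ioi] at h1
  have h2 : ContDiffOn ℝ (0 + 1) (deriv c) (Set.Ioi 0) := by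
    rw [zero_add]; exact h1.2.2
  rw [contDiffOn_succ_iff_deriv_of_isOpen isOpen_Ioi] at h2
  exact ⟨h1.1, h2.1, h2.2.2.continuousOn⟩

private lemma key_ibp (c : ℝ → ℝ) (hc : ContDiffOn ℝ 2 c (Set.Ioi 0))
    (a b p q : ℝ) (hp : 0 < p) (hpq : p ≤ q) :
    ∫ x in p..q, deriv (deriv c) x * (a * x + b) =
      (deriv c q * (a * q + b) - a * c q) - (deriv c p * (a * p + b) - a * c p) := by
  obtain ⟨h1, h2, h3⟩ := aux_contDiff c hc
  have hsub : Set.uIcc p q ⊆ Set.Ioi 0 := by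
    rw [Set.uIcc_of_le hpq]
    intro x hx
    exact lt_of_lt_of_le hp hx.1
  have hderiv : ∀ x ∈ Set.uIcc p q,
      HasDerivAt (fun y => deriv c y * (a * y + b) - a * c y)
        (deriv (deriv c) x * (a * x + b)) x := by
    intro x hx
    have hx0 : x ∈ Set.Ioi (0:ℝ) := hsub hx
    have hcx : HasDerivAt c (deriv c x) x :=
      (h1.differentiableAt (isOpen_Ioi.mem_nhds hx0)).hasDerivAt
    have hc'x : HasDerivAt (deriv c) (deriv (deriv c) x) x :=
      (h2.differentiableAt (isOpen_Ioi.mem_nhds hx0)).hasDerivAt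
    have hlin : HasDerivAt (fun y : ℝ => a * y + b) a x := by
      simpa using ((hasDerivAt_id x).const_mul a).add_const b
    have := (hc'x.mul hlin).sub (hcx.const_mul a)
    have e : deriv (deriv c) x * (a * x + b) =
        deriv (deriv c) x * (a * x + b) + deriv c x * a - a * deriv c x := by ring
    rw [e]; exact this
  have hint : IntervalIntegrable (fun x => deriv (deriv c) x * (a * x + b)) volume p q := by
    apply ContinuousOn.intervalIntegrable
    rw [Set.uIcc_of_le hpq] at hsub ⊢
    exact (h3.mono hsub).mul (Continuous.continuousOn (by continuity))
  exact intervalIntegral.integral_eq_sub_of_hasDerivAt hderiv hint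

/-- For `c` twice continuously differentiable on `(0,∞)` and
`0 < u_min ≤ 1 ≤ u_max`, for every `u ∈ [u_min, u_max]`,
`∫_{1/u_max}^{1/u_min} c''(λ) (max(λu,1) − max(λ,1)) dλ
  = (c'(1/u_min)·(1/u_min) − c(1/u_min))·(u − 1) + u·c(1/u) − c(1)`. -/
theorem weighted_integral_PR_generator
    (c : ℝ → ℝ) (hc : ContDiffOn ℝ 2 c (Set.Ioi 0))
    (umin umax : ℝ) (humin : 0 < umin) (humin1 : umin ≤ 1) (humax1 : 1 ≤ umax)
    (u : ℝ) (hu : u ∈ Set.Icc umin umax) :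
    ∫ lam in (1 / umax)..(1 / umin),
        deriv (deriv c) lam * (max (lam * u) 1 - max lam 1) =
      (deriv c (1 / umin) * (1 / umin) - c (1 / umin)) * (u - 1) +
        u * c (1 / u) - c 1 := by
  obtain ⟨h1, h2, h3⟩ := aux_contDiff c hc
  obtain ⟨hum, huM⟩ := hu
  have hu0 : 0 < u := lt_of_lt_of_le humin hum
  have humax0 : (0:ℝ) < umax := lt_of_lt_of_le one_pos humax1
  have ha0 : (0:ℝ) < 1 / umax := by positivity
  have hb1 : (1:ℝ) ≤ 1 / umin := by
    rw [le_one_div (by norm_num) humin]; simpa using humin1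
  have ha1 : (1:ℝ) / umax ≤ 1 := by
    rw [div_le_one humax0]; exact humax1
  have hu'0 : (0:ℝ) < 1 / u := by positivity
  set g : ℝ → ℝ := fun lam => deriv (deriv c) lam * (max (lam * u) 1 - max lam 1) with hg
  have hInt : ∀ p q : ℝ, 0 < p → p ≤ q → IntervalIntegrable g volume p q := by
    intro p q hp hpq
    apply ContinuousOn.intervalIntegrable
    rw [Set.uIcc_of_le hpq]
    have hsub : Set.Icc p q ⊆ Set.Ioi 0 := fun x hx => lt_of_lt_of_le hp hx.1
    exact (h3.mono hsub).mul (Continuous.continuousOn (by continuity))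
  have huinv : u * (1 / u) = 1 := by field_simp
  rcases le_total 1 u with hcase | hcase
  · -- u ≥ 1 : split at 1/u and 1
    have hau : 1 / umax ≤ 1 / u := one_div_le_one_div_of_le hu0 huM
    have hub : (1:ℝ) / u ≤ 1 := by rw [div_le_one hu0]; exact hcase
    rw [← intervalIntegral.integral_add_adjacent_intervals
        (hInt _ _ ha0 hau) (hInt _ _ hu'0 (hub.trans hb1)),
      ← intervalIntegral.integral_add_adjacent_intervals
        (hInt _ _ hu'0 hub) (hInt _ _ one_pos hb1)]
    have e1 : ∫ x in (1/umax)..(1/u), g x = 0 := by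
      rw [intervalIntegral.integral_congr (g := fun _ => (0:ℝ))]
      · simp
      · intro x hx
        rw [Set.uIcc_of_le hau] at hx
        have hxu : x * u ≤ 1 := by
          calc x * u ≤ (1/u) * u := by nlinarith [hx.2]
          _ = 1 := by field_simp
        have hx1 : x ≤ 1 := hx.2.trans hub
        simp [hg, max_eq_right hxu, max_eq_right hx1]
    have e2 : ∫ x in (1/u)..1, g x =
        ∫ x in (1/u)..1, deriv (deriv c) x * (u * x + (-1)) := by
      apply intervalIntegral.integral_congr
      intro x hx
      rw [Set.uIcc_of_le hub] at hx
      have hxu : (1:ℝ) ≤ x * u := by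
        calc (1:ℝ) = (1/u) * u := by field_simp
        _ ≤ x * u := by nlinarith [hx.1]
      simp only [hg, max_eq_left hxu, max_eq_right hx.2]
      ring
    have e3 : ∫ x in (1:ℝ)..(1/umin), g x =
        ∫ x in (1:ℝ)..(1/umin), deriv (deriv c) x * ((u-1) * x + 0) := by
      apply intervalIntegral.integral_congr
      intro x hx
      rw [Set.uIcc_of_le hb1] at hx
      have hxu : (1:ℝ) ≤ x * u := by nlinarith [hx.1]
      simp only [hg, max_eq_left hxu, max_eq_left hx.1]
      ring
    rw [e1, e2, e3, key_ibp c hc u (-1) (1/u) 1 hu'0 hub,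
      key_ibp c hc (u-1) 0 1 (1/umin) one_pos hb1]
    field_simp
    ring
  · -- u ≤ 1 : split at 1 and 1/u
    have hu'b : 1 / u ≤ 1 / umin := one_div_le_one_div_of_le humin hum
    have h1u : (1:ℝ) ≤ 1 / u := by rw [le_one_div one_pos hu0]; simpa using hcase
    rw [← intervalIntegral.integral_add_adjacent_intervals
        (hInt _ _ ha0 ha1) (hInt _ _ one_pos (h1u.trans hu'b)),
      ← intervalIntegral.integral_add_adjacent_intervals
        (hInt _ _ one_pos h1u) (hInt _ _ hu'0 hu'b)]
    have e1 : ∫ x in (1/umax)..1, g x = 0 := by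
      rw [intervalIntegral.integral_congr (g := fun _ => (0:ℝ))]
      · simp
      · intro x hx
        rw [Set.uIcc_of_le ha1] at hx
        have hxu : x * u ≤ 1 := by nlinarith [hx.2, hx.1, ha0.le]
        simp [hg, max_eq_right hxu, max_eq_right hx.2]
    have e2 : ∫ x in (1:ℝ)..(1/u), g x =
        ∫ x in (1:ℝ)..(1/u), deriv (deriv c) x * ((-1) * x + 1) := by
      apply intervalIntegral.integral_congr
      intro x hx
      rw [Set.uIcc_of_le h1u] at hx
      have hxu : x * u ≤ 1 := by
        calc x * u ≤ (1/u) * u := by nlinarith [hx.2]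
        _ = 1 := by field_simp
      simp only [hg, max_eq_right hxu, max_eq_left hx.1]
      ring
    have e3 : ∫ x in (1/u)..(1/umin), g x =
        ∫ x in (1/u)..(1/umin), deriv (deriv c) x * ((u-1) * x + 0) := by
      apply intervalIntegral.integral_congr
      intro x hx
      rw [Set.uIcc_of_le hu'b] at hx
      have hxu : (1:ℝ) ≤ x * u := by
        calc (1:ℝ) = (1/u) * u := by field_simp
        _ ≤ x * u := by nlinarith [hx.1]
      have hx1 : (1:ℝ) ≤ x := h1u.trans hx.1
      simp only [hg, max_eq_left hxu, max_eq_left hx1]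
      ring
    rw [e1, e2, e3, key_ibp c hc (-1) 1 1 (1/u) one_pos h1u,
      key_ibp c hc (u-1) 0 (1/u) (1/umin) hu'0 hu'b]
    field_simp
    ring
end

section
/- Suppose there exist constants 0 < m ≤ 1 ≤ M < ∞ such that m ≤ p̂(x)/p(x) ≤ M for μ-a.e. x. Then the Kullback–Leibler divergence decomposes as KL(P‖P̂) = ∫ p(x) log(p(x)/p̂(x)) dμ(x) = ∫_m^M (1/λ²) · D_λ^PR(P‖P̂) dλ. -/
open MeasureTheory Set intervalIntegral


lemma cont_aux (r a b : ℝ) (ha : 0 < a) (hab : a ≤ b) :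
    IntervalIntegrable (fun l => (1/l^2) * max (l*r) 1) volume a b := by
  apply ContinuousOn.intervalIntegrable
  apply ContinuousOn.mul
  · exact ContinuousOn.div continuousOn_const (continuous_pow 2).continuousOn
      (fun x hx => by
        rw [Set.uIcc_of_le hab] at hx
        exact pow_ne_zero 2 (ne_of_gt (lt_of_lt_of_le ha hx.1)))
  · exact ((continuous_id.mul continuous_const).max continuous_const).continuousOn

lemma aux1 (m M r : ℝ) (hm : 0 < m) (hr : 0 < r) (hmr : m * r ≤ 1) (hrM : 1 ≤ M * r) :
    ∫ l in m..M, (1/l^2) * max (l*r) 1 = 1/m - r + r * (Real.log M + Real.log r) := by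
  set c := 1/r with hc
  have hc0 : 0 < c := by positivity
  have hcr : c * r = 1 := one_div_mul_cancel (ne_of_gt hr)
  have hmc : m ≤ c := by rw [hc, le_div_iff₀ hr]; simpa using hmr
  have hcM : c ≤ M := by rw [hc, div_le_iff₀ hr]; simpa using hrM
  have hM0 : 0 < M := lt_of_lt_of_le hc0 hcM
  rw [← intervalIntegral.integral_add_adjacent_intervals (cont_aux r m c hm hmc)
    (cont_aux r c M hc0 hcM)]
  have e1 : ∫ l in m..c, (1/l^2) * max (l*r) 1 = ∫ l in m..c, (l:ℝ)^(-2:ℤ) := by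
    apply intervalIntegral.integral_congr
    intro l hl
    dsimp only
    rw [Set.uIcc_of_le hmc] at hl
    have h1 : l * r ≤ 1 := by nlinarith [hl.2]
    rw [max_eq_right h1, mul_one, zpow_neg]
    norm_num
  have e2 : ∫ l in c..M, (1/l^2) * max (l*r) 1 = ∫ l in c..M, r * (1/l) := by
    apply intervalIntegral.integral_congr
    intro l hl
    dsimp only
    rw [Set.uIcc_of_le hcM] at hl
    have hl0 : 0 < l := lt_of_lt_of_le hc0 hl.1
    have h1 : (1:ℝ) ≤ l * r := by nlinarith [hl.1]
    rw [max_eq_left h1]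
    field_simp
  rw [e1, e2, integral_zpow (Or.inr ⟨by norm_num, Set.notMem_uIcc_of_lt hm hc0⟩),
    intervalIntegral.integral_const_mul, integral_one_div (Set.notMem_uIcc_of_lt hc0 hM0)]
  have hlogc : Real.log (M / c) = Real.log M + Real.log r := by
    rw [Real.log_div (ne_of_gt hM0) (ne_of_gt hc0), hc, one_div, Real.log_inv]
    ring
  rw [hlogc, hc]
  push_cast
  rw [zpow_neg, zpow_neg, zpow_one, zpow_one]
  field_simp
  ring

lemma aux3 (m M r : ℝ) (hm : 0 < m) (hm1 : m ≤ 1) (hM1 : 1 ≤ M) (hr : 0 < r)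
    (hmr : m * r ≤ 1) (hrM : 1 ≤ M * r) :
    ∫ l in m..M, (1/l^2) * (max (l*r) 1 - max l 1)
      = r * Real.log r + (r - 1) * Real.log M + (1 - r) := by
  have hMm : m ≤ M := hm1.trans hM1
  have h1 : ∫ l in m..M, (1/l^2) * (max (l*r) 1 - max l 1)
      = (∫ l in m..M, (1/l^2) * max (l*r) 1) - ∫ l in m..M, (1/l^2) * max (l*1) 1 := by
    rw [← intervalIntegral.integral_sub (cont_aux r m M hm hMm) (cont_aux 1 m M hm hMm)]
    apply intervalIntegral.integral_congr
    intro l _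
    dsimp only
    rw [mul_one]
    ring
  rw [h1, aux1 m M r hm hr hmr hrM, aux1 m M 1 hm one_pos (by linarith) (by linarith)]
  simp [Real.log_one]
  ring


/-- The KL divergence decomposes as a weighted integral of PR-divergences:
`KL(P‖P̂) = ∫_m^M (1/λ²) · D_λ^PR(P‖P̂) dλ`. -/
theorem KL_eq_weighted_integral_PRdiv
    {X : Type*} [MeasurableSpace X] (μ : Measure X) [SigmaFinite μ]
    (p phat : X → ℝ) (hp : Measurable p) (hphat : Measurable phat)
    (hp0 : ∀ x, 0 ≤ p x) (hphat0 : ∀ x, 0 ≤ phat x)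
    (hpint : ∫ x, p x ∂μ = 1) (hphatint : ∫ x, phat x ∂μ = 1)
    (hppos : ∀ᵐ x ∂μ, 0 < p x) (hphatpos : ∀ᵐ x ∂μ, 0 < phat x)
    (m M : ℝ) (hm : 0 < m) (hm1 : m ≤ 1) (hM1 : 1 ≤ M)
    (hratio : ∀ᵐ x ∂μ, m ≤ phat x / p x ∧ phat x / p x ≤ M) :
    ∫ x, p x * Real.log (p x / phat x) ∂μ =
      ∫ lam in m..M,
        (1 / lam ^ 2) *
          ∫ x, phat x * (max (lam * (p x / phat x)) 1 - max lam 1) ∂μ := by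
  have hMm : m ≤ M := hm1.trans hM1
  have hM0 : 0 < M := lt_of_lt_of_le hm hMm
  have hip : Integrable p μ := by
    by_contra h; rw [integral_undef h] at hpint; norm_num at hpint
  have hiphat : Integrable phat μ := by
    by_contra h; rw [integral_undef h] at hphatint; norm_num at hphatint
  set ν : Measure ℝ := volume.restrict (Set.Ioc m M) with hν
  haveI : IsFiniteMeasure ν := by
    constructor
    rw [hν, Measure.restrict_apply_univ, Real.volume_Ioc]
    exact ENNReal.ofReal_lt_top
  set F : ℝ × X → ℝ :=
    fun z => (1 / z.1 ^ 2) * (phat z.2 * (max (z.1 * (p z.2 / phat z.2)) 1 - max z.1 1))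
    with hF
  have hFm : Measurable F := by
    apply Measurable.mul
    · exact (measurable_const.div ((measurable_fst).pow_const 2))
    · exact (hphat.comp measurable_snd).mul
        ((((measurable_fst).mul ((hp.comp measurable_snd).div
            (hphat.comp measurable_snd))).max measurable_const).sub
          ((measurable_fst).max measurable_const))
  have hgint : Integrable (fun z : ℝ × X => m⁻¹ * (p z.2 + phat z.2)) (ν.prod μ) := by
    refine (integrable_prod_iff ?_).2 ⟨?_, ?_⟩
    · exact (measurable_const.mul
        ((hp.comp measurable_snd).add (hphat.comp measurable_snd))).aestronglyMeasurable
    · exact Filter.Eventually.of_forall fun lam => ((hip.add hiphat).const_mul m⁻¹)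
    · simpa using (integrable_const (μ := ν) (∫ y, ‖m⁻¹ * (p y + phat y)‖ ∂μ))
  have hae1 : ∀ᵐ z ∂(ν.prod μ), z.1 ∈ Set.Ioc m M := by
    rw [Filter.eventually_iff, mem_ae_iff]
    have h : {z : ℝ × X | z.1 ∈ Set.Ioc m M}ᶜ = (Set.Ioc m M)ᶜ ×ˢ Set.univ := by
      ext z; simp
    rw [h, Measure.prod_prod, hν, Measure.restrict_apply (measurableSet_Ioc.compl)]
    simp
  have hae2 : ∀ᵐ z ∂(ν.prod μ), 0 < p z.2 ∧ 0 < phat z.2 := by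
    rw [Filter.eventually_iff, mem_ae_iff]
    refine measure_mono_null (fun z hz => ?_)
      (show (ν.prod μ) (Set.univ ×ˢ {x | ¬(0 < p x ∧ 0 < phat x)}) = 0 from ?_)
    · exact ⟨Set.mem_univ _, hz⟩
    · rw [Measure.prod_prod]
      have h : μ {x | ¬(0 < p x ∧ 0 < phat x)} = 0 := ae_iff.1 (hppos.and hphatpos)
      rw [h, mul_zero]
  have hbound : ∀ᵐ z ∂(ν.prod μ), ‖F z‖ ≤ m⁻¹ * (p z.2 + phat z.2) := by
    filter_upwards [hae1, hae2] with z hz1 hz2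
    obtain ⟨lam, x⟩ := z
    simp only at hz1 hz2 ⊢
    have hphx : 0 < phat x := hz2.2
    have hl0 : 0 < lam := lt_trans hm hz1.1
    set r := p x / phat x with hrdef
    have hmax : |max (lam*r) 1 - max lam 1| ≤ lam * |r - 1| := by
      calc |max (lam*r) 1 - max lam 1| ≤ |lam*r - lam| := abs_max_sub_max_le_abs _ _ _
        _ = |lam| * |r - 1| := by rw [← abs_mul]; ring_nf
        _ = lam * |r - 1| := by rw [abs_of_pos hl0]
    have key : phat x * |max (lam*r) 1 - max lam 1| ≤ lam * (p x + phat x) := by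
      have e3 : phat x * (lam * |r - 1|) = lam * |p x - phat x| := by
        have h4 : p x - phat x = phat x * (r - 1) := by
          rw [hrdef]; field_simp
        rw [h4, abs_mul, abs_of_pos hphx]; ring
      calc phat x * |max (lam*r) 1 - max lam 1| ≤ phat x * (lam * |r - 1|) :=
            mul_le_mul_of_nonneg_left hmax hphx.le
        _ = lam * |p x - phat x| := e3
        _ ≤ lam * (p x + phat x) := by
            apply mul_le_mul_of_nonneg_left _ hl0.le
            exact abs_le.2 ⟨by linarith [hp0 x, hphat0 x], by linarith [hp0 x, hphat0 x]⟩
    rw [hF]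
    simp only
    rw [Real.norm_eq_abs, abs_mul, abs_mul, abs_of_nonneg (show (0:ℝ) ≤ 1/lam^2 by positivity),
      abs_of_nonneg hphx.le, ← mul_assoc]
    calc (1/lam^2) * phat x * |max (lam*r) 1 - max lam 1|
        ≤ (1/lam^2) * (lam * (p x + phat x)) := by
          rw [mul_assoc]
          exact mul_le_mul_of_nonneg_left key (div_nonneg zero_le_one (sq_nonneg lam))
      _ = (1/lam) * (p x + phat x) := by field_simp
      _ ≤ m⁻¹ * (p x + phat x) := by
          apply mul_le_mul_of_nonneg_right _ (add_nonneg (hp0 x) (hphat0 x))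
          rw [one_div]
          exact inv_anti₀ hm hz1.1.le
  have hFint : Integrable F (ν.prod μ) := hgint.mono' hFm.aestronglyMeasurable hbound
  set C := |Real.log m| + |Real.log M| with hC
  have hKL : Integrable (fun x => p x * Real.log (p x / phat x)) μ := by
    apply (hip.const_mul C).mono'
    · exact (hp.mul ((hp.div hphat).log)).aestronglyMeasurable
    · filter_upwards [hppos, hphatpos, hratio] with x hpx hphx hrx
      have ht : 0 < phat x / p x := div_pos hphx hpx
      have hlog : |Real.log (p x / phat x)| ≤ C := by
        have h1 : Real.log (p x / phat x) = - Real.log (phat x / p x) := by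
          rw [← Real.log_inv]; congr 1; rw [inv_div]
        rw [h1, abs_neg]
        have hl : Real.log m ≤ Real.log (phat x / p x) := Real.log_le_log hm hrx.1
        have hr2 : Real.log (phat x / p x) ≤ Real.log M := Real.log_le_log ht hrx.2
        refine abs_le.2 ⟨?_, ?_⟩
        · have := neg_abs_le (Real.log m); have := abs_nonneg (Real.log M); linarith
        · have := le_abs_self (Real.log M); have := abs_nonneg (Real.log m); linarith
      rw [Real.norm_eq_abs, abs_mul, abs_of_nonneg (hp0 x), mul_comm]
      exact mul_le_mul_of_nonneg_right hlog (hp0 x)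
  have hptwise : ∀ᵐ x ∂μ, (∫ lam, F (lam, x) ∂ν)
      = p x * Real.log (p x / phat x) + (p x - phat x) * (Real.log M - 1) := by
    filter_upwards [hppos, hphatpos, hratio] with x hpx hphx hrx
    set r := p x / phat x with hrdef
    have hr : 0 < r := div_pos hpx hphx
    have hcr : (phat x / p x) * r = 1 := by rw [hrdef]; field_simp
    have h1 : m * r ≤ 1 := by nlinarith [hrx.1, hr.le]
    have h2 : (1:ℝ) ≤ M * r := by nlinarith [hrx.2, hr.le]
    have hiv : (∫ lam, F (lam, x) ∂ν) = ∫ lam in m..M, F (lam, x) := by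
      rw [hν, intervalIntegral.integral_of_le hMm]
    rw [hiv]
    have e : ∀ lam : ℝ, F (lam, x) = phat x * ((1/lam^2) * (max (lam * r) 1 - max lam 1)) := by
      intro lam; rw [hF]; ring
    simp only [e]
    rw [intervalIntegral.integral_const_mul, aux3 m M r hm hm1 hM1 hr h1 h2]
    have hpr : phat x * r = p x := by rw [hrdef]; field_simp
    rw [← hpr]
    ring
  symm
  calc ∫ lam in m..M, (1 / lam ^ 2) *
          ∫ x, phat x * (max (lam * (p x / phat x)) 1 - max lam 1) ∂μ
      = ∫ lam in m..M, ∫ x, F (lam, x) ∂μ := by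
        apply intervalIntegral.integral_congr
        intro lam _
        rw [hF]
        exact (MeasureTheory.integral_const_mul _ _).symm
    _ = ∫ lam, (∫ x, F (lam, x) ∂μ) ∂ν := intervalIntegral.integral_of_le hMm
    _ = ∫ x, (∫ lam, F (lam, x) ∂ν) ∂μ :=
        integral_integral_swap (f := fun lam x => F (lam, x)) hFint
    _ = ∫ x, (p x * Real.log (p x / phat x) + (p x - phat x) * (Real.log M - 1)) ∂μ :=
        integral_congr_ae hptwise
    _ = (∫ x, p x * Real.log (p x / phat x) ∂μ)
          + ∫ x, (p x - phat x) * (Real.log M - 1) ∂μ :=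
        integral_add hKL ((hip.sub hiphat).mul_const _)
    _ = ∫ x, p x * Real.log (p x / phat x) ∂μ := by
        rw [MeasureTheory.integral_mul_const, integral_sub hip hiphat, hpint, hphatint]
        ring
end

section
/- Suppose there exist constants 0 < m ≤ 1 ≤ M < ∞ such that m ≤ p̂(x)/p(x) ≤ M for μ-a.e. x. Then the reverse Kullback–Leibler divergence decomposes as rKL(P‖P̂) = ∫ p̂(x) log(p̂(x)/p(x)) dμ(x) = ∫_m^M (1/λ) · D_λ^PR(P‖P̂) dλ. -/
open MeasureTheory Real

lemma lemA {m M u : ℝ} (hm : 0 < m) (hm1 : m ≤ 1) (hM1 : 1 ≤ M)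
    (hu1 : 1/M ≤ u) (hu2 : u ≤ 1/m) :
    ∫ lam in m..M, (1/lam) * (max (lam * u) 1 - max lam 1)
      = Real.log (1/u) + M * (u - 1) := by
  have hM0 : (0:ℝ) < M := lt_of_lt_of_le one_pos hM1
  have hu0 : 0 < u := lt_of_lt_of_le (by positivity) hu1
  set c := 1/u with hc
  have hc0 : 0 < c := by positivity
  have hmc : m ≤ c := by
    rw [hc, le_div_iff₀ hu0]
    nlinarith [(le_div_iff₀ hm).mp hu2]
  have hcM : c ≤ M := by
    rw [hc, div_le_iff₀ hu0]
    nlinarith [(div_le_iff₀ hM0).mp hu1]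
  -- continuity helpers
  have hcont1 : ∀ a b : ℝ, 0 < a → 0 < b →
      IntervalIntegrable (fun lam => (1/lam) * max (lam * u) 1) volume a b := by
    intro a b ha hb
    apply ContinuousOn.intervalIntegrable
    apply ContinuousOn.mul
    · exact ContinuousOn.div continuousOn_const continuousOn_id
        (fun x hx => by
          rcases Set.mem_uIcc.mp hx with ⟨h1,_⟩|⟨h1,_⟩ <;> nlinarith)
    · exact ((continuous_id.mul continuous_const).max continuous_const).continuousOn
  have hcont2 : ∀ a b : ℝ, 0 < a → 0 < b →
      IntervalIntegrable (fun lam => (1/lam) * max lam 1) volume a b := by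
    intro a b ha hb
    apply ContinuousOn.intervalIntegrable
    apply ContinuousOn.mul
    · exact ContinuousOn.div continuousOn_const continuousOn_id
        (fun x hx => by
          rcases Set.mem_uIcc.mp hx with ⟨h1,_⟩|⟨h1,_⟩ <;> nlinarith)
    · exact (continuous_id.max continuous_const).continuousOn
  have hsub : ∫ lam in m..M, (1/lam) * (max (lam * u) 1 - max lam 1)
      = (∫ lam in m..M, (1/lam) * max (lam * u) 1)
        - ∫ lam in m..M, (1/lam) * max lam 1 := by
    rw [← intervalIntegral.integral_sub (hcont1 m M hm hM0) (hcont2 m M hm hM0)]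
    congr 1; ext lam; ring
  have hI1 : (∫ lam in m..M, (1/lam) * max (lam * u) 1)
      = Real.log (c/m) + u * (M - c) := by
    rw [← intervalIntegral.integral_add_adjacent_intervals
      (hcont1 m c hm hc0) (hcont1 c M hc0 hM0)]
    have e1 : (∫ lam in m..c, (1/lam) * max (lam * u) 1) = Real.log (c/m) := by
      rw [intervalIntegral.integral_congr (g := fun lam => 1/lam)
        (fun lam hlam => by
          rw [Set.uIcc_of_le hmc] at hlam
          have h1 : lam * u ≤ 1 := by
            have := hlam.2
            calc lam * u ≤ c * u := by nlinarith [hlam.1]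
            _ = 1 := by rw [hc]; field_simp
          simp [max_eq_right h1])]
      exact integral_one_div (by
        intro h; rw [Set.uIcc_of_le hmc] at h; linarith [h.1])
    have e2 : (∫ lam in c..M, (1/lam) * max (lam * u) 1) = u * (M - c) := by
      rw [intervalIntegral.integral_congr (g := fun _ => u)
        (fun lam hlam => by
          rw [Set.uIcc_of_le hcM] at hlam
          have hl0 : 0 < lam := lt_of_lt_of_le hc0 hlam.1
          have h1 : 1 ≤ lam * u := by
            calc (1:ℝ) = c * u := by rw [hc]; field_simp
            _ ≤ lam * u := by nlinarith [hlam.1]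
          rw [max_eq_left h1]; field_simp)]
      simp [intervalIntegral.integral_const]; ring
    rw [e1, e2]
  have hI2 : (∫ lam in m..M, (1/lam) * max lam 1)
      = Real.log (1/m) + (M - 1) := by
    rw [← intervalIntegral.integral_add_adjacent_intervals
      (hcont2 m 1 hm one_pos) (hcont2 1 M one_pos hM0)]
    have e1 : (∫ lam in m..(1:ℝ), (1/lam) * max lam 1) = Real.log (1/m) := by
      rw [intervalIntegral.integral_congr (g := fun lam => 1/lam)
        (fun lam hlam => by
          rw [Set.uIcc_of_le hm1] at hlam
          simp [max_eq_right hlam.2])]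
      exact integral_one_div (by
        intro h; rw [Set.uIcc_of_le hm1] at h; linarith [h.1])
    have e2 : (∫ lam in (1:ℝ)..M, (1/lam) * max lam 1) = M - 1 := by
      rw [intervalIntegral.integral_congr (g := fun _ => (1:ℝ))
        (fun lam hlam => by
          rw [Set.uIcc_of_le hM1] at hlam
          have hl0 : 0 < lam := lt_of_lt_of_le one_pos hlam.1
          rw [max_eq_left hlam.1]; field_simp)]
      simp [intervalIntegral.integral_const]
    rw [e1, e2]
  rw [hsub, hI1, hI2]
  have : Real.log (c/m) = Real.log c - Real.log m := Real.log_div (ne_of_gt hc0) (ne_of_gt hm)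
  have h2 : Real.log (1/m) = - Real.log m := by rw [one_div, Real.log_inv]
  have h3 : u * c = 1 := by rw [hc]; field_simp
  rw [this, h2, hc]
  ring_nf
  nlinarith [h3, mul_inv_cancel₀ (ne_of_gt hu0)]

/-- The reverse KL divergence decomposes as a weighted integral of PR-divergences:
`rKL(P‖P̂) = ∫_m^M (1/λ) · D_λ^PR(P‖P̂) dλ`. -/
theorem rKL_eq_weighted_integral_PRdiv
    {X : Type*} [MeasurableSpace X] (μ : Measure X) [SigmaFinite μ]
    (p phat : X → ℝ) (hp : Measurable p) (hphat : Measurable phat)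
    (hp0 : ∀ x, 0 ≤ p x) (hphat0 : ∀ x, 0 ≤ phat x)
    (hpint : ∫ x, p x ∂μ = 1) (hphatint : ∫ x, phat x ∂μ = 1)
    (hppos : ∀ᵐ x ∂μ, 0 < p x) (hphatpos : ∀ᵐ x ∂μ, 0 < phat x)
    (m M : ℝ) (hm : 0 < m) (hm1 : m ≤ 1) (hM1 : 1 ≤ M)
    (hratio : ∀ᵐ x ∂μ, m ≤ phat x / p x ∧ phat x / p x ≤ M) :
    ∫ x, phat x * Real.log (phat x / p x) ∂μ =
      ∫ lam in m..M,
        (1 / lam) *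
          ∫ x, phat x * (max (lam * (p x / phat x)) 1 - max lam 1) ∂μ := by
  have hM0 : (0:ℝ) < M := lt_of_lt_of_le one_pos hM1
  have hmM : m ≤ M := le_trans hm1 hM1
  have hpintg : Integrable p μ := by
    by_contra h; rw [integral_undef h] at hpint; norm_num at hpint
  have hphatintg : Integrable phat μ := by
    by_contra h; rw [integral_undef h] at hphatint; norm_num at hphatint
  set F : ℝ → X → ℝ :=
    fun lam x => (1/lam) * (phat x * (max (lam * (p x / phat x)) 1 - max lam 1)) with hF
  set ρ : Measure ℝ := volume.restrict (Set.Ioc m M) with hρ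
  have : IsFiniteMeasure ρ := by
    constructor
    rw [hρ, Measure.restrict_apply_univ, Real.volume_Ioc]
    exact ENNReal.ofReal_lt_top
  have hFm : Measurable (Function.uncurry F) := by
    apply Measurable.mul
    · exact (measurable_const.div measurable_fst)
    · apply (hphat.comp measurable_snd).mul
      apply Measurable.sub
      · exact (measurable_fst.mul ((hp.comp measurable_snd).div
          (hphat.comp measurable_snd))).max measurable_const
      · exact measurable_fst.max measurable_const
  -- pointwise bound
  have hbound : ∀ lam x, 0 < lam → ‖F lam x‖ ≤ |p x - phat x| := by
    intro lam x hl
    rcases eq_or_lt_of_le (hphat0 x) with h0 | h0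
    · simp [hF, ← h0, abs_nonneg]
    · have key : |max (lam * (p x / phat x)) 1 - max lam 1|
          ≤ |lam * (p x / phat x) - lam| := abs_max_sub_max_le_abs _ _ _
      have hnorm : ‖F lam x‖
          = (1/lam) * (phat x * |max (lam * (p x / phat x)) 1 - max lam 1|) := by
        rw [hF]
        rw [Real.norm_eq_abs, abs_mul, abs_mul,
          abs_of_pos (by positivity : (0:ℝ) < 1/lam), abs_of_pos h0]
      have e : |p x - phat x| = phat x * |p x / phat x - 1| := by
        rw [show p x - phat x = phat x * (p x / phat x - 1) by field_simp, abs_mul,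
          abs_of_pos h0]
      have h2 : (1/lam) * (phat x * |lam * (p x / phat x) - lam|) = |p x - phat x| := by
        rw [show lam * (p x / phat x) - lam = lam * (p x / phat x - 1) by ring,
          abs_mul, abs_of_pos hl, e]
        field_simp
      rw [hnorm, ← h2]
      have h3 := mul_le_mul_of_nonneg_left key (hphat0 x)
      have h4 := mul_le_mul_of_nonneg_left h3 (by positivity : (0:ℝ) ≤ 1/lam)
      linarith
  have hG : Integrable (fun z : ℝ × X => (fun _ : ℝ => (1:ℝ)) z.1 * |p z.2 - phat z.2|)
      (ρ.prod μ) :=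
    Integrable.mul_prod (integrable_const 1) (hpintg.sub hphatintg).abs
  have hl : ∀ᵐ z ∂(ρ.prod μ), 0 < z.1 := by
    rw [Filter.eventually_iff, mem_ae_iff]
    have hset : {z : ℝ × X | 0 < z.1}ᶜ = Set.Iic (0:ℝ) ×ˢ Set.univ := by
      ext z; simp [Set.mem_prod]
    rw [hset, Measure.prod_prod]
    have hz : ρ (Set.Iic (0:ℝ)) = 0 := by
      rw [hρ, Measure.restrict_apply measurableSet_Iic]
      have : Set.Iic (0:ℝ) ∩ Set.Ioc m M = ∅ := by
        ext lam
        simp only [Set.mem_inter_iff, Set.mem_Iic, Set.mem_Ioc, Set.mem_empty_iff_false,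
          iff_false, not_and]
        intro h1 h2
        intro _; linarith
      rw [this, measure_empty]
    rw [hz, zero_mul]
  have hFint : Integrable (Function.uncurry F) (ρ.prod μ) := by
    apply Integrable.mono' (by simpa using hG) hFm.aestronglyMeasurable
    filter_upwards [hl] with z hz
    exact hbound z.1 z.2 hz
  have hrhs : (∫ lam in m..M, (1 / lam) *
        ∫ x, phat x * (max (lam * (p x / phat x)) 1 - max lam 1) ∂μ)
      = ∫ x, (∫ lam in Set.Ioc m M, F lam x) ∂μ := by
    rw [intervalIntegral.integral_of_le hmM]
    rw [← MeasureTheory.integral_integral_swap hFint]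
    apply integral_congr_ae
    apply Filter.Eventually.of_forall
    intro lam
    simp only [hF]
    rw [← MeasureTheory.integral_const_mul]
  rw [hrhs]
  have hinner : ∀ᵐ x ∂μ, (∫ lam in Set.Ioc m M, F lam x)
      = phat x * Real.log (phat x / p x) + M * (p x - phat x) := by
    filter_upwards [hppos, hphatpos, hratio] with x hpx hphx hr
    obtain ⟨hr1, hr2⟩ := hr
    have hne : phat x ≠ 0 := ne_of_gt hphx
    set u : ℝ := p x / phat x with hu
    have hu0 : 0 < u := by positivity
    have hv : phat x / p x = 1/u := by rw [hu]; field_simp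
    have hu1 : 1/M ≤ u := (one_div_le hu0 hM0).mp (hv ▸ hr2)
    have hu2 : u ≤ 1/m := (le_one_div hu0 hm).mpr (hv ▸ hr1)
    rw [← intervalIntegral.integral_of_le hmM]
    rw [intervalIntegral.integral_congr
      (g := fun lam => phat x * ((1/lam) * (max (lam * u) 1 - max lam 1)))
      (fun lam _ => by rw [hF]; ring)]
    rw [intervalIntegral.integral_const_mul, lemA hm hm1 hM1 hu1 hu2, ← hv]
    have hpu : phat x * u = p x := by rw [hu]; field_simp
    rw [← hpu]; ring
  rw [integral_congr_ae hinner]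
  set C := max |Real.log m| |Real.log M| with hC
  have hf1 : Integrable (fun x => phat x * Real.log (phat x / p x)) μ := by
    apply Integrable.mono' (hphatintg.const_mul C)
    · exact (hphat.mul ((hphat.div hp).log)).aestronglyMeasurable
    · filter_upwards [hphatpos, hratio] with x hphx hr
      obtain ⟨hr1, hr2⟩ := hr
      rw [Real.norm_eq_abs, abs_mul, abs_of_pos hphx]
      have hlog : |Real.log (phat x / p x)| ≤ C :=
        abs_le_max_abs_abs (Real.log_le_log hm hr1)
          (Real.log_le_log (lt_of_lt_of_le hm hr1) hr2)
      nlinarith [mul_le_mul_of_nonneg_left hlog (hphat0 x)]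
  have hf2 : Integrable (fun x => M * (p x - phat x)) μ :=
    (hpintg.sub hphatintg).const_mul M
  rw [integral_add hf1 hf2, MeasureTheory.integral_const_mul,
    integral_sub hpintg hphatintg, hpint, hphatint]
  ring
end

section
/- For every λ ∈ (0,∞), the discriminator T(x) defined by T(x) = λ when λ·p(x) ≥ p̂(x) and T(x) = 0 otherwise attains the PR-divergence in the dual form: ∫ p(x)T(x) dμ(x) − ∫ p̂(x)·(T(x)/λ + max(λ,1) − 1) dμ(x) = D_λ^PR(P‖P̂). -/
open MeasureTheory

/-- The discriminator `T(x) = λ·1{λ p(x) ≥ p̂(x)}` attains the PR-divergence in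
the dual form. -/
theorem PR_optimal_discriminator_attains
    {X : Type*} [MeasurableSpace X] (μ : Measure X) [SigmaFinite μ]
    (p phat : X → ℝ) (hp : Measurable p) (hphat : Measurable phat)
    (hp0 : ∀ x, 0 ≤ p x) (hphat0 : ∀ x, 0 ≤ phat x)
    (hpint : ∫ x, p x ∂μ = 1) (hphatint : ∫ x, phat x ∂μ = 1)
    (hphatpos : ∀ᵐ x ∂μ, 0 < phat x)
    (lam : ℝ) (hlam : 0 < lam)
    (T : X → ℝ) (hT : ∀ x, T x = if phat x ≤ lam * p x then lam else 0) :
    (∫ x, p x * T x ∂μ) -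
        (∫ x, phat x * (T x / lam + max lam 1 - 1) ∂μ) =
      ∫ x, phat x * (max (lam * (p x / phat x)) 1 - max lam 1) ∂μ := by
  have hpI : Integrable p μ := by
    by_contra h
    rw [integral_undef h] at hpint
    norm_num at hpint
  have hphatI : Integrable phat μ := by
    by_contra h
    rw [integral_undef h] at hphatint
    norm_num at hphatint
  have hTfun : T = fun x => if phat x ≤ lam * p x then lam else 0 := funext hT
  have hTm : Measurable T := by
    rw [hTfun]
    exact Measurable.ite (measurableSet_le hphat (hp.const_mul lam))
      measurable_const measurable_const
  have hTb : ∀ x, 0 ≤ T x ∧ T x ≤ lam := by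
    intro x
    rw [hT x]
    split <;> constructor <;> simp [hlam.le]
  have h1 : Integrable (fun x => p x * T x) μ := by
    refine (hpI.const_mul lam).mono ((hp.mul hTm).aestronglyMeasurable)
      (Filter.Eventually.of_forall fun x => ?_)
    have := hTb x
    simp only [Real.norm_eq_abs]
    rw [abs_of_nonneg (mul_nonneg (hp0 x) this.1),
      abs_of_nonneg (mul_nonneg hlam.le (hp0 x))]
    rw [mul_comm lam (p x)]
    exact mul_le_mul_of_nonneg_left this.2 (hp0 x)
  have h2 : Integrable (fun x => phat x * (T x / lam + max lam 1 - 1)) μ := by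
    refine (hphatI.const_mul (max lam 1)).mono
      ((hphat.mul (((hTm.div_const lam).add_const _).sub_const 1)).aestronglyMeasurable)
      (Filter.Eventually.of_forall fun x => ?_)
    have hb := hTb x
    have h01 : 0 ≤ T x / lam + max lam 1 - 1 := by
      have : (1:ℝ) ≤ max lam 1 := le_max_right _ _
      have : (0:ℝ) ≤ T x / lam := div_nonneg hb.1 hlam.le
      nlinarith [le_max_right lam 1]
    have hup : T x / lam + max lam 1 - 1 ≤ max lam 1 := by
      have : T x / lam ≤ 1 := (div_le_one hlam).mpr hb.2
      linarith
    simp only [Real.norm_eq_abs]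
    rw [abs_of_nonneg (mul_nonneg (hphat0 x) h01),
      abs_of_nonneg (mul_nonneg (le_max_of_le_right zero_le_one) (hphat0 x))]
    rw [mul_comm (max lam 1) (phat x)]
    exact mul_le_mul_of_nonneg_left hup (hphat0 x)
  rw [← integral_sub h1 h2]
  refine integral_congr_ae ?_
  filter_upwards [hphatpos] with x hx
  rw [hT x]
  by_cases hc : phat x ≤ lam * p x
  · rw [if_pos hc]
    have h1' : (1:ℝ) ≤ lam * (p x / phat x) := by
      rw [mul_div_assoc'] at *
      exact (one_le_div hx).mpr hc
    rw [max_eq_left h1']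
    field_simp
    ring
  · rw [if_neg hc]
    have h1' : lam * (p x / phat x) ≤ 1 := by
      rw [mul_div_assoc']
      exact (div_le_one hx).mpr (le_of_not_ge hc)
    rw [max_eq_right h1']
    ring
end
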